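/- Let D = ℝ or D = ℂ, and let X be any n×n matrix over D. Then there exists an invertible n×n matrix g over D with g·X·g⁻¹ = -X if and only if there exists an invertible n×n matrix h over D with h² = I and h·X·h⁻¹ = -X. In other words, an element of gl(n,D) is Ad_{GL(n,D)}-real if and only if it is strongly Ad_{GL(n,D)}-real. -/

import Mathlib

open Matrix

set_option maxHeartbeats 1000000

/-- The Jordan block `J(λ, m)`: an `m × m` matrix with `λ` on the diagonal,
`1` on the superdiagonal, and `0` elsewhere. -/
def jordanBlock {D : Type*} [Ring D] (lam : D) (m : ℕ) : Matrix (Fin m) (Fin m) D :=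
  Matrix.of fun i j => if i = j then lam else if (i : ℕ) + 1 = (j : ℕ) then 1 else 0

/-- The realification embedding `Ψ : M(n,ℂ) → M(2n,ℝ)`, replacing each complex entry
`z` by the 2×2 real block `((Re z, Im z), (-Im z, Re z))`. -/
def Psi {n : ℕ} (A : Matrix (Fin n) (Fin n) ℂ) :
    Matrix (Fin n × Fin 2) (Fin n × Fin 2) ℝ :=
  Matrix.of fun p q =>
    !![(A p.1 q.1).re, (A p.1 q.1).im; -(A p.1 q.1).im, (A p.1 q.1).re] p.2 q.2

/-- The standard embedding of `ℂ` into the real quaternions,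
sending `a + b i` to `a + b 𝐢`. -/
def toQuat (z : ℂ) : Quaternion ℝ := ⟨z.re, z.im, 0, 0⟩

/-- `X ∈ gl(n,D)` is `Ad_{GL(n,D)}`-real: there is an invertible matrix `g`
with `g X g⁻¹ = -X`. -/
def AdjReal {D : Type*} [Ring D] {ι : Type*} [Fintype ι] [DecidableEq ι]
    (X : Matrix ι ι D) : Prop :=
  ∃ g : (Matrix ι ι D)ˣ, g.val * X * (g⁻¹).val = -X

/-- `X ∈ gl(n,D)` is strongly `Ad_{GL(n,D)}`-real: there is an invertible matrix `g`
with `g² = I` and `g X g⁻¹ = -X`. -/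
def StronglyAdjReal {D : Type*} [Ring D] {ι : Type*} [Fintype ι] [DecidableEq ι]
    (X : Matrix ι ι D) : Prop :=
  ∃ g : (Matrix ι ι D)ˣ, g * g = 1 ∧ g.val * X * (g⁻¹).val = -X

/-- `A` is reversible in `GL(n,D)`: `A` is invertible and there is an invertible
matrix `g` with `g A g⁻¹ = A⁻¹`. -/
def Reversible {D : Type*} [Ring D] {ι : Type*} [Fintype ι] [DecidableEq ι]
    (A : Matrix ι ι D) : Prop :=
  ∃ a : (Matrix ι ι D)ˣ, a.val = A ∧ ∃ g : (Matrix ι ι D)ˣ, g * a * g⁻¹ = a⁻¹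

/-- `A` is strongly reversible in `GL(n,D)`: `A` is invertible and there is an
invertible matrix `g` with `g² = I` and `g A g⁻¹ = A⁻¹`. -/
def StronglyReversible {D : Type*} [Ring D] {ι : Type*} [Fintype ι] [DecidableEq ι]
    (A : Matrix ι ι D) : Prop :=
  ∃ a : (Matrix ι ι D)ˣ, a.val = A ∧ ∃ g : (Matrix ι ι D)ˣ, g * g = 1 ∧ g * a * g⁻¹ = a⁻¹



/- ====================  Auxiliary development  ==================== -/

section Stmt13Aux

open Polynomial DirectSum UniqueFactorizationMonoid



variable {R : Type} [CommRing R]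

lemma sigma_inj (σ : R →+* R) (hσ : ∀ r, σ (σ r) = r) : Function.Injective σ := by
  intro a b hab
  have := congrArg σ hab
  rwa [hσ, hσ] at this

lemma sigma_prime [IsDomain R] (σ : R →+* R) (hσ : ∀ r, σ (σ r) = r)
    {p : R} (hp : Prime p) : Prime (σ p) := by
  refine ⟨fun h0 => hp.1 ?_, fun hu => hp.2.1 ?_, fun a b hab => ?_⟩
  · have : σ p = σ 0 := by simpa using h0
    exact sigma_inj σ hσ this
  · have := hu.map σ
    rwa [hσ] at this
  · have : p ∣ σ a * σ b := by
      have := _root_.map_dvd σ hab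
      rw [_root_.map_mul, hσ] at this
      exact this
    rcases hp.2.2 _ _ this with h | h
    · left
      have := _root_.map_dvd σ h
      rwa [hσ] at this
    · right
      have := _root_.map_dvd σ h
      rwa [hσ] at this

lemma sigma_assoc (σ : R →+* R) {a b : R} (h : Associated a b) :
    Associated (σ a) (σ b) := by
  rcases h with ⟨u, rfl⟩
  exact ⟨(u.isUnit.map σ).unit, by simp⟩

/-- The semilinear quotient involution. -/
lemma quotInvolution (σ : R →+* R) (hσ : ∀ r, σ (σ r) = r) (I : Submodule R R)
    (hI : ∀ r ∈ I, σ r ∈ I) :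
    ∃ τ : (R ⧸ I) → (R ⧸ I),
      (∀ r, τ (Submodule.Quotient.mk r) = Submodule.Quotient.mk (σ r)) ∧
      (∀ x y, τ (x + y) = τ x + τ y) ∧
      (∀ (a : R) (x : R ⧸ I), τ (a • x) = σ a • τ x) ∧
      (∀ x, τ (τ x) = x) := by
  let f : R →ₛₗ[σ] R ⧸ I :=
    { toFun := fun r => Submodule.Quotient.mk (σ r)
      map_add' := fun a b => by
        show Submodule.Quotient.mk (σ (a + b)) =
          Submodule.Quotient.mk (σ a) + Submodule.Quotient.mk (σ b)
        rw [_root_.map_add, Submodule.Quotient.mk_add]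
      map_smul' := fun a b => by
        show Submodule.Quotient.mk (σ (a • b)) = σ a • Submodule.Quotient.mk (σ b)
        rw [smul_eq_mul, _root_.map_mul, ← smul_eq_mul, Submodule.Quotient.mk_smul] }
  have hker : I ≤ LinearMap.ker f := by
    intro r hr
    simp only [LinearMap.mem_ker]
    show Submodule.Quotient.mk (σ r) = 0
    rw [Submodule.Quotient.mk_eq_zero]
    exact hI r hr
  let τ := I.liftQ f hker
  have hmk : ∀ r : R, τ (Submodule.Quotient.mk r) = Submodule.Quotient.mk (σ r) := fun r =>
    Submodule.liftQ_apply I f r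
  refine ⟨τ, hmk, fun x y => _root_.map_add τ x y, fun a x => τ.map_smulₛₗ a x, ?_⟩
  · intro x
    obtain ⟨a, rfl⟩ := Submodule.Quotient.mk_surjective _ x
    rw [hmk, hmk, hσ]



section SelfPairedX

variable {R : Type} [CommRing R] [IsDomain R] [IsPrincipalIdealRing R]
variable {M : Type} [AddCommGroup M] [Module R M] [Module.Finite R M]

theorem selfpaired (σ : R →+* R) (hσ : ∀ r, σ (σ r) = r)
    (p : R) (hp : Prime p) (hps : Associated (σ p) p) (k : ℕ)
    (hk : ∀ x : M, p ^ k • x = 0) :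
    ∃ h : M → M, (∀ x, h (h x) = x) ∧ (∀ x y, h (x + y) = h x + h y) ∧
      ∀ (a : R) (x : M), h (a • x) = σ a • h x := by
  classical
  have hT : Module.IsTorsion R M := fun x =>
    ⟨⟨p ^ k, mem_nonZeroDivisors_of_ne_zero (pow_ne_zero _ hp.ne_zero)⟩, hk x⟩
  obtain ⟨ι, fι, q, hq, e, ⟨eN⟩⟩ := Module.equiv_directSum_of_isTorsion hT
  haveI := fι
  -- each span is σ-stable
  have hQ : ∀ i, ∀ r ∈ (Submodule.span R {q i ^ e i}), σ r ∈ Submodule.span R {q i ^ e i} := by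
    intro i
    have hassoc : Associated (σ (q i ^ e i)) (q i ^ e i) := by
      by_cases he : e i = 0
      · rw [he, pow_zero, _root_.map_one]
      · -- q i is associated to p
        have hqi : Associated (q i) p := by
          have h1 : p ^ k • (DirectSum.of (fun i => R ⧸ Submodule.span R {q i ^ e i}) i
              (Submodule.Quotient.mk 1)) = 0 := by
            have h0 := hk (eN.symm (DirectSum.of _ i (Submodule.Quotient.mk 1)))
            have h2 := congrArg eN h0
            rwa [_root_.map_smul, eN.apply_symm_apply, _root_.map_zero] at h2
          have h2 : (p ^ k) • (Submodule.Quotient.mk 1 : R ⧸ Submodule.span R {q i ^ e i}) = 0 := by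
            have h3 := congrFun (congrArg DFunLike.coe h1) i
            rwa [DFinsupp.smul_apply, DirectSum.of_eq_same, DirectSum.zero_apply] at h3
          have h3 : (p ^ k : R) ∈ Submodule.span R {q i ^ e i} := by
            rw [← Submodule.Quotient.mk_eq_zero]
            have : (Submodule.Quotient.mk (p ^ k) : R ⧸ Submodule.span R {q i ^ e i}) =
                (p ^ k) • Submodule.Quotient.mk 1 := by
              rw [← Submodule.Quotient.mk_smul, smul_eq_mul, mul_one]
            rw [this, h2]
          obtain ⟨t, ht⟩ := Submodule.mem_span_singleton.mp h3
          have hdvd : q i ^ e i ∣ p ^ k := Dvd.intro_left t ht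
          have hdvd2 : q i ∣ p ^ k := dvd_trans (dvd_pow_self (q i) he) hdvd
          have hqp : Prime (q i) := UniqueFactorizationMonoid.irreducible_iff_prime.mp (hq i)
          have hqd : q i ∣ p := hqp.dvd_of_dvd_pow hdvd2
          exact (hq i).associated_of_dvd hp.irreducible hqd
        have a1 : Associated (σ (q i ^ e i)) ((σ (q i)) ^ e i) := by rw [_root_.map_pow]
        have a2 : Associated ((σ (q i)) ^ e i) (p ^ e i) :=
          Associated.pow_pow ((sigma_assoc σ hqi).trans hps)
        have a3 : Associated (p ^ e i) (q i ^ e i) := Associated.pow_pow hqi.symm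
        exact (a1.trans a2).trans a3
    intro r hr
    obtain ⟨t, ht⟩ := Submodule.mem_span_singleton.mp hr
    obtain ⟨u, hu⟩ := hassoc
    rw [Submodule.mem_span_singleton]
    refine ⟨σ t * ↑u⁻¹, ?_⟩
    have hc : (σ t * ↑u⁻¹) • (q i ^ e i) = σ t * ↑u⁻¹ * (σ (q i ^ e i) * ↑u) := by
      rw [hu, smul_eq_mul]
    rw [hc]
    have : σ t * ↑u⁻¹ * (σ (q i ^ e i) * ↑u) = σ t * σ (q i ^ e i) * (↑u⁻¹ * ↑u) := by ring
    rw [this, Units.inv_mul, mul_one, ← _root_.map_mul, ← smul_eq_mul, ht]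
  -- diagonal involution on the direct sum
  have hτ := fun i => quotInvolution σ hσ (Submodule.span R {q i ^ e i}) (hQ i)
  choose τ hτmk hτadd hτsmul hτinv using hτ
  set Q : ι → Type := fun i => R ⧸ Submodule.span R {q i ^ e i} with hQdef
  let τA : ∀ i, Q i →+ Q i := fun i => AddMonoidHom.mk' (τ i) (fun x y => hτadd i x y)
  let H : (⨁ i, Q i) →+ (⨁ i, Q i) :=
    DirectSum.toAddMonoid (fun i => (DirectSum.of Q i).comp (τA i))
  have Hof : ∀ (i : ι) (x : Q i), H (DirectSum.of Q i x) = DirectSum.of Q i (τ i x) := by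
    intro i x
    exact DirectSum.toAddMonoid_of _ i x
  have HH : ∀ z, H (H z) = z := by
    intro z
    induction z using DirectSum.induction_on with
    | zero => simp
    | of i x => rw [Hof, Hof, hτinv]
    | add x y hx hy => rw [_root_.map_add, _root_.map_add, hx, hy]
  have Hsmul : ∀ (a : R) z, H (a • z) = σ a • H z := by
    intro a z
    induction z using DirectSum.induction_on with
    | zero => rw [smul_zero, _root_.map_zero, smul_zero]
    | of i x =>
        have h1 : a • DirectSum.of Q i x = DirectSum.of Q i (a • x) := by
          rw [← DirectSum.lof_eq_of R, ← _root_.map_smul, DirectSum.lof_eq_of]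
        have h2 : σ a • DirectSum.of Q i (τ i x) = DirectSum.of Q i (σ a • τ i x) := by
          rw [← DirectSum.lof_eq_of R, ← _root_.map_smul, DirectSum.lof_eq_of]
        rw [h1, Hof, hτsmul, ← h2, Hof]
    | add x y hx hy => rw [smul_add, _root_.map_add, hx, hy, _root_.map_add, smul_add]
  refine ⟨fun x => eN.symm (H (eN x)), ?_, ?_, ?_⟩
  · intro x
    show eN.symm (H (eN (eN.symm (H (eN x))))) = x
    rw [eN.apply_symm_apply, HH, eN.symm_apply_apply]
  · intro x y
    show eN.symm (H (eN (x + y))) = eN.symm (H (eN x)) + eN.symm (H (eN y))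
    rw [_root_.map_add, _root_.map_add, _root_.map_add]
  · intro a x
    show eN.symm (H (eN (a • x))) = σ a • eN.symm (H (eN x))
    rw [_root_.map_smul, Hsmul, _root_.map_smul]

end SelfPairedX

section Key
variable {R : Type} [CommRing R] [IsDomain R] [IsPrincipalIdealRing R]
variable {M : Type} [AddCommGroup M] [Module R M] [Module.Finite R M]

theorem key (σ : R →+* R) (hσ : ∀ r, σ (σ r) = r)
    (c : R) (hc0 : c ≠ 0) (hcM : ∀ x : M, c • x = 0)
    (ψ ψ' : M → M) (hψψ' : ∀ x, ψ' (ψ x) = x) (hψ'ψ : ∀ x, ψ (ψ' x) = x)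
    (hψadd : ∀ x y, ψ (x + y) = ψ x + ψ y)
    (hψs : ∀ (a : R) (x : M), ψ (a • x) = σ a • ψ x) :
    ∃ h : M → M, (∀ x, h (h x) = x) ∧ (∀ x y, h (x + y) = h x + h y) ∧
      ∀ (a : R) (x : M), h (a • x) = σ a • h x := by
  classical
  haveI : StrongNormalizationMonoid R := UniqueFactorizationMonoid.strongNormalizationMonoid
  -- basic ψ facts
  have hinj : Function.Injective ψ := Function.LeftInverse.injective hψψ'
  have hψ0 : ψ 0 = 0 := by
    have h1 : ψ 0 = ψ 0 + ψ 0 := by rw [← hψadd, add_zero]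
    have h2 : ψ 0 + 0 = ψ 0 + ψ 0 := by rw [add_zero]; exact h1
    exact (add_left_cancel h2).symm
  have hψ'add : ∀ x y, ψ' (x + y) = ψ' x + ψ' y := by
    intro x y
    apply hinj
    rw [hψ'ψ, hψadd, hψ'ψ, hψ'ψ]
  have hψ'0 : ψ' 0 = 0 := by
    have h1 : ψ' 0 = ψ' 0 + ψ' 0 := by rw [← hψ'add, add_zero]
    have h2 : ψ' 0 + 0 = ψ' 0 + ψ' 0 := by rw [add_zero]; exact h1
    exact (add_left_cancel h2).symm
  have hψ's : ∀ (a : R) (x : M), ψ' (a • x) = σ a • ψ' x := by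
    intro a x
    apply hinj
    rw [hψ'ψ, hψs, hσ, hψ'ψ]
  -- the symmetrized annihilator
  set C := c * σ c with hCdef
  have hC0 : C ≠ 0 := by
    apply mul_ne_zero hc0
    intro h
    apply hc0
    have := congrArg σ h
    rw [hσ, _root_.map_zero] at this
    exact this
  have hCσ : σ C = C := by rw [hCdef, _root_.map_mul, hσ, mul_comm]
  have hCM : ∀ x : M, C • x = 0 := by
    intro x
    rw [hCdef, mul_comm, mul_smul, hcM, smul_zero]
  -- factorization data
  set Fac := normalizedFactors C with hFac
  set S : Finset R := Fac.toFinset with hS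
  set k : R → ℕ := fun p => Fac.count p with hk
  set nσ : R → R := fun p => normalize (σ p) with hnσ
  -- counting characterization
  have hcount : ∀ q : R, Prime q → normalize q = q → ∀ n : ℕ, (q ^ n ∣ C ↔ n ≤ k q) := by
    intro q hq hqn n
    constructor
    · intro hdvd
      have h1 := (dvd_iff_normalizedFactors_le_normalizedFactors
        (pow_ne_zero n hq.ne_zero) hC0).mp hdvd
      rw [normalizedFactors_pow, normalizedFactors_irreducible hq.irreducible, hqn,
        Multiset.nsmul_singleton] at h1
      have h2 := Multiset.count_le_of_le q h1
      rwa [Multiset.count_replicate_self] at h2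
    · intro hn
      have h1 : Multiset.replicate n q ≤ Fac := Multiset.le_count_iff_replicate_le.mp hn
      have h2 : (Multiset.replicate n q).prod ∣ Fac.prod := Multiset.prod_dvd_prod_of_le h1
      rw [Multiset.prod_replicate] at h2
      exact h2.trans (prod_normalizedFactors hC0).dvd
  -- S basic facts
  have hSprime : ∀ p ∈ S, Prime p := by
    intro p hp
    exact prime_of_normalized_factor p (Multiset.mem_toFinset.mp hp)
  have hSnorm : ∀ p ∈ S, normalize p = p := by
    intro p hp
    exact normalize_normalized_factor p (Multiset.mem_toFinset.mp hp)
  have hSdvd : ∀ p ∈ S, p ∣ C := by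
    intro p hp
    exact dvd_of_mem_normalizedFactors (Multiset.mem_toFinset.mp hp)
  have hmemS : ∀ p : R, Prime p → normalize p = p → p ∣ C → p ∈ S := by
    intro p hp hpn hpd
    rw [hS, Multiset.mem_toFinset, ← Multiset.one_le_count_iff_mem]
    have := (hcount p hp hpn 1).mp (by rwa [pow_one])
    exact this
  -- nσ facts
  have hnσprime : ∀ p, Prime p → Prime (nσ p) := by
    intro p hp
    exact (associated_normalize (σ p)).prime (sigma_prime σ hσ hp)
  have hnσassoc : ∀ p, Associated (nσ p) (σ p) := fun p => normalize_associated (σ p)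
  have hnn : ∀ p, normalize p = p → nσ (nσ p) = p := by
    intro p hpn
    have h1 : Associated (σ (nσ p)) (σ (σ p)) := sigma_assoc σ (hnσassoc p)
    rw [hσ] at h1
    show normalize (σ (nσ p)) = p
    calc normalize (σ (nσ p)) = normalize p := by
          rw [normalize_eq_normalize_iff]
          exact ⟨h1.dvd, h1.symm.dvd⟩
    _ = p := hpn
  have hSclosed : ∀ p ∈ S, nσ p ∈ S := by
    intro p hp
    refine hmemS _ (hnσprime p (hSprime p hp)) (normalize_idem _) ?_
    have h1 : σ p ∣ σ C := _root_.map_dvd σ (hSdvd p hp)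
    rw [hCσ] at h1
    exact (hnσassoc p).dvd.trans h1
  have hkσ : ∀ p ∈ S, k (nσ p) = k p := by
    have hhalf : ∀ p ∈ S, k p ≤ k (nσ p) := by
      intro p hp
      apply (hcount (nσ p) (hnσprime p (hSprime p hp)) (normalize_idem _) (k p)).mp
      have h1 : p ^ k p ∣ C := (hcount p (hSprime p hp) (hSnorm p hp) (k p)).mpr le_rfl
      have h2 : σ (p ^ k p) ∣ σ C := _root_.map_dvd σ h1
      rw [hCσ, _root_.map_pow] at h2
      exact (Associated.pow_pow (hnσassoc p)).dvd.trans h2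
    intro p hp
    have h1 := hhalf p hp
    have h2 := hhalf (nσ p) (hSclosed p hp)
    rw [hnn p (hSnorm p hp)] at h2
    omega
  -- coprimality and torsion
  have hpair : (↑S : Set R).Pairwise (Function.onFun IsCoprime fun p => p ^ k p) := by
    intro p hp p' hp' hne
    have hirr : Irreducible p := (hSprime p hp).irreducible
    have hbase : IsCoprime p p' := by
      rw [hirr.coprime_iff_not_dvd]
      intro hdvd
      have hassoc : Associated p p' := hirr.associated_of_dvd (hSprime p' hp').irreducible hdvd
      have heq : normalize p = normalize p' := by
        rw [normalize_eq_normalize_iff]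
        exact ⟨hassoc.dvd, hassoc.symm.dvd⟩
      rw [hSnorm p hp, hSnorm p' hp'] at heq
      exact hne heq
    exact hbase.pow
  have hprod : Module.IsTorsionBy R M (∏ i ∈ S, (fun p => p ^ k p) i) := by
    intro x
    have h1 : (∏ i ∈ S, i ^ k i) = Fac.prod := (Finset.prod_multiset_count Fac).symm
    obtain ⟨u, hu⟩ := prod_normalizedFactors hC0
    show (∏ i ∈ S, i ^ k i) • x = 0
    have h2 : Fac.prod = C * ↑u⁻¹ := by
      rw [← hu, mul_assoc, Units.mul_inv, mul_one]
    rw [h1, h2, mul_comm, mul_smul, hCM, smul_zero]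
  -- internal direct sum decomposition
  set T : {x // x ∈ S} → Submodule R M :=
    (fun i => Submodule.torsionBy R M ((i : R) ^ k (i : R))) with hT
  have internal : DirectSum.IsInternal T :=
    Submodule.torsionBy_isInternal (q := fun p => p ^ k p) hpair hprod
  set E : (⨁ i, T i) ≃ₗ[R] M :=
    LinearEquiv.ofBijective (DirectSum.coeLinearMap T) internal with hE
  have hEapp : ∀ z, E z = DirectSum.coeLinearMap T z := fun z => rfl
  have hsame : ∀ (i : {x // x ∈ S}) (y : T i), (E.symm ↑y) i = y := by
    intro i y
    exact internal.ofBijective_coeLinearMap_same y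
  have hne' : ∀ (i j : {x // x ∈ S}) (y : T i), i ≠ j → (E.symm ↑y) j = 0 := by
    intro i j y hij
    exact internal.ofBijective_coeLinearMap_of_ne hij y
  -- decomposition of an arbitrary element
  have hcoesum : ∀ z : ⨁ i, T i, DirectSum.coeLinearMap T z = ∑ i, ((z i : M)) := by
    intro z
    induction z using DirectSum.induction_on with
    | zero => simp
    | of i x =>
        rw [DirectSum.coeLinearMap_of]
        rw [Finset.sum_eq_single i]
        · rw [DirectSum.of_eq_same (β := fun i => ↥(T i))]
        · intro j _ hji
          rw [DirectSum.of_eq_of_ne (β := fun i => ↥(T i)) i j x hji]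
          rfl
        · intro hi
          exact absurd (Finset.mem_univ i) hi
    | add x y hx hy =>
        rw [_root_.map_add, hx, hy, ← Finset.sum_add_distrib]
        apply Finset.sum_congr rfl
        intro i _
        rw [DirectSum.add_apply, Submodule.coe_add]
  have hdecomp : ∀ x : M, ∑ i, ((E.symm x i : M)) = x := by
    intro x
    rw [← hcoesum (E.symm x), ← hEapp, E.apply_symm_apply]
  -- psi maps torsion components
  have hψT : ∀ (p : R), p ∈ S → ∀ x : M, x ∈ Submodule.torsionBy R M (p ^ k p) →
      ψ x ∈ Submodule.torsionBy R M (nσ p ^ k (nσ p)) := by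
    intro p hp x hx
    rw [Submodule.mem_torsionBy_iff] at hx ⊢
    rw [hkσ p hp]
    obtain ⟨u, hu⟩ : Associated ((σ p) ^ k p) (nσ p ^ k p) :=
      Associated.pow_pow (hnσassoc p).symm
    have h0 : (σ p ^ k p) • ψ x = 0 := by
      rw [← _root_.map_pow, ← hψs, hx, hψ0]
    rw [← hu, mul_comm, mul_smul, h0, smul_zero]
  have hψ'T : ∀ (p : R), p ∈ S → ∀ x : M, x ∈ Submodule.torsionBy R M (p ^ k p) →
      ψ' x ∈ Submodule.torsionBy R M (nσ p ^ k (nσ p)) := by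
    intro p hp x hx
    rw [Submodule.mem_torsionBy_iff] at hx ⊢
    rw [hkσ p hp]
    obtain ⟨u, hu⟩ : Associated ((σ p) ^ k p) (nσ p ^ k p) :=
      Associated.pow_pow (hnσassoc p).symm
    have h0 : (σ p ^ k p) • ψ' x = 0 := by
      rw [← _root_.map_pow, ← hψ's, hx, hψ'0]
    rw [← hu, mul_comm, mul_smul, h0, smul_zero]
  -- the pairing permutation
  have hπmem : ∀ i : {x // x ∈ S}, nσ (i : R) ∈ S := fun i => hSclosed _ i.2
  set π : {x // x ∈ S} → {x // x ∈ S} := fun i => ⟨nσ (i : R), hπmem i⟩ with hπ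
  have hππ : ∀ i, π (π i) = i := by
    intro i
    apply Subtype.ext
    exact hnn _ (hSnorm _ i.2)
  -- involutions on self-paired components
  have hsfA : ∀ i : {x // x ∈ S}, ∃ hf : ↥(T i) → ↥(T i),
      (nσ (i : R) = ↑i → ((∀ x, hf (hf x) = x) ∧ (∀ x y, hf (x + y) = hf x + hf y) ∧
        (∀ (a : R) (x : ↥(T i)), hf (a • x) = σ a • hf x))) := by
    intro i
    by_cases hi : nσ (i : R) = ↑i
    · haveI : Module.Finite R ↥(T i) := ⟨IsNoetherian.noetherian ⊤⟩
      have hps : Associated (σ (i : R)) ↑i := by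
        have h1 := associated_normalize (σ (i : R))
        rwa [show normalize (σ (i : R)) = nσ ↑i from rfl, hi] at h1
      obtain ⟨hf, h1, h2, h3⟩ := selfpaired σ hσ (i : R) (hSprime _ i.2) hps (k ↑i)
        (fun x => Submodule.smul_torsionBy (R := R) (M := M) ((i : R) ^ k (i : R)) x)
      exact ⟨hf, fun _ => ⟨h1, h2, h3⟩⟩
    · exact ⟨id, fun hcon => absurd hcon hi⟩
  choose hc hcspec using hsfA
  have hc0 : ∀ (i : {x // x ∈ S}) (hi : nσ (i : R) = ↑i), hc i 0 = 0 := by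
    intro i hi
    have h2 := (hcspec i hi).2.1
    have h1 : hc i 0 = hc i 0 + hc i 0 := by rw [← h2, add_zero]
    have h3 : hc i 0 + 0 = hc i 0 + hc i 0 := by rw [add_zero]; exact h1
    exact (add_left_cancel h3).symm
  -- the component maps
  set u : {x // x ∈ S} → M → M := fun i x =>
    if hi : nσ (i : R) = ↑i then ((hc i ((E.symm x) i) : M))
    else if WellOrderingRel (i : R) (nσ (i : R)) then ψ (((E.symm x) (π i) : M))
    else ψ' (((E.symm x) (π i) : M)) with hudef
  have hu_self : ∀ (i : {x // x ∈ S}) (x : M) (hi : nσ (i : R) = ↑i), u i x = ↑(hc i ((E.symm x) i)) := by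
    intro i x hi
    simp only [hudef]
    rw [dif_pos hi]
  have hu_swapT : ∀ (i : {x // x ∈ S}) (x : M) (hi : ¬ nσ (i : R) = ↑i) (hw : WellOrderingRel (i : R) (nσ (i : R))),
      u i x = ψ ↑((E.symm x) (π i)) := by
    intro i x hi hw
    simp only [hudef]
    rw [dif_neg hi, if_pos hw]
  have hu_swapF : ∀ (i : {x // x ∈ S}) (x : M) (hi : ¬ nσ (i : R) = ↑i) (hw : ¬ WellOrderingRel (i : R) (nσ (i : R))),
      u i x = ψ' ↑((E.symm x) (π i)) := by
    intro i x hi hw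
    simp only [hudef]
    rw [dif_neg hi, if_neg hw]
  -- memberships
  have humem : ∀ (i : {x // x ∈ S}) (x : M), u i x ∈ T i := by
    intro i x
    by_cases hi : nσ (i : R) = ↑i
    · rw [hu_self i x hi]
      exact (hc i ((E.symm x) i)).2
    · have hmem : ∀ w : M, w ∈ T (π i) → ψ w ∈ T i ∧ ψ' w ∈ T i := by
        intro w hw
        have h1 := hψT (nσ ↑i) (hπmem i) w hw
        have h2 := hψ'T (nσ ↑i) (hπmem i) w hw
        rw [hnn (↑i) (hSnorm _ i.2)] at h1 h2
        exact ⟨h1, h2⟩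
      by_cases hw : WellOrderingRel (i : R) (nσ (i : R))
      · rw [hu_swapT i x hi hw]
        exact (hmem _ ((E.symm x) (π i)).2).1
      · rw [hu_swapF i x hi hw]
        exact (hmem _ ((E.symm x) (π i)).2).2
  -- additivity and semilinearity of the components
  have hEadd : ∀ (j : {x // x ∈ S}) (x y : M),
      (E.symm (x + y)) j = (E.symm x) j + (E.symm y) j := by
    intro j x y
    rw [_root_.map_add, DirectSum.add_apply]
  have hEsmul : ∀ (j : {x // x ∈ S}) (a : R) (x : M),
      (E.symm (a • x)) j = a • (E.symm x) j := by
    intro j a x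
    rw [_root_.map_smul, DFinsupp.smul_apply]
  have huadd : ∀ (i : {x // x ∈ S}) (x y : M), u i (x + y) = u i x + u i y := by
    intro i x y
    by_cases hi : nσ (i : R) = ↑i
    · rw [hu_self i _ hi, hu_self i x hi, hu_self i y hi, hEadd, (hcspec i hi).2.1,
        Submodule.coe_add]
    · by_cases hw : WellOrderingRel (i : R) (nσ (i : R))
      · rw [hu_swapT i _ hi hw, hu_swapT i x hi hw, hu_swapT i y hi hw, hEadd,
          Submodule.coe_add, hψadd]
      · rw [hu_swapF i _ hi hw, hu_swapF i x hi hw, hu_swapF i y hi hw, hEadd,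
          Submodule.coe_add, hψ'add]
  have husmul : ∀ (i : {x // x ∈ S}) (a : R) (x : M), u i (a • x) = σ a • u i x := by
    intro i a x
    by_cases hi : nσ (i : R) = ↑i
    · rw [hu_self i _ hi, hu_self i x hi, hEsmul, (hcspec i hi).2.2, Submodule.coe_smul]
    · by_cases hw : WellOrderingRel (i : R) (nσ (i : R))
      · rw [hu_swapT i _ hi hw, hu_swapT i x hi hw, hEsmul, Submodule.coe_smul, hψs]
      · rw [hu_swapF i _ hi hw, hu_swapF i x hi hw, hEsmul, Submodule.coe_smul, hψ's]
  -- the candidate involution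
  set h : M → M := fun x => ∑ i, u i x with hhdef
  have hadd : ∀ x y, h (x + y) = h x + h y := by
    intro x y
    simp only [hhdef]
    rw [← Finset.sum_add_distrib]
    exact Finset.sum_congr rfl fun i _ => huadd i x y
  have hsmul : ∀ (a : R) x, h (a • x) = σ a • h x := by
    intro a x
    simp only [hhdef]
    rw [Finset.smul_sum]
    exact Finset.sum_congr rfl fun i _ => husmul i a x
  -- vanishing of foreign components
  have hzero_u : ∀ (i j : {x // x ∈ S}) (y : ↥(T j)), i ≠ π j → u i ↑y = 0 := by
    intro i j y hij
    by_cases hi : nσ (i : R) = ↑i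
    · have hij2 : j ≠ i := by
        intro hji
        apply hij
        rw [← hji] at hi ⊢
        exact (Subtype.ext hi).symm
      rw [hu_self i _ hi, hne' j i y hij2, hc0 i hi, Submodule.coe_zero]
    · have hij2 : j ≠ π i := by
        intro hji
        apply hij
        rw [hji, hππ]
      by_cases hw : WellOrderingRel (i : R) (nσ (i : R))
      · rw [hu_swapT i _ hi hw, hne' j (π i) y hij2, Submodule.coe_zero, hψ0]
      · rw [hu_swapF i _ hi hw, hne' j (π i) y hij2, Submodule.coe_zero, hψ'0]
  have hcomp : ∀ (j : {x // x ∈ S}) (y : ↥(T j)), h ↑y = u (π j) ↑y := by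
    intro j y
    exact Finset.sum_eq_single_of_mem (π j) (Finset.mem_univ _)
      (fun i _ hi => hzero_u i j y hi)
  -- involution on components
  have hinvcomp : ∀ (j : {x // x ∈ S}) (y : ↥(T j)), h (h ↑y) = ↑y := by
    intro j y
    by_cases hj : nσ (j : R) = ↑j
    · have hπj : π j = j := Subtype.ext hj
      rw [hcomp j y, hπj, hu_self j _ hj, hsame j y]
      have hmem2 := (hc j y).2
      rw [show ((hc j y : M)) = (((hc j y : ↥(T j))) : M) from rfl]
      rw [hcomp j (hc j y), hπj, hu_self j _ hj, hsame j (hc j y), (hcspec j hj).1]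
    · have hj' : ¬ nσ ((π j : R)) = ((π j : R)) := by
        intro hcon
        apply hj
        have h1 : nσ (nσ (j : R)) = (j : R) := hnn _ (hSnorm _ j.2)
        have h2 : nσ (nσ (j : R)) = nσ (j : R) := hcon
        rw [h1] at h2
        exact h2.symm
      have hcond : nσ ((π j : R)) = (j : R) := hnn _ (hSnorm _ j.2)
      have eπcoe : (((E.symm (↑y : M)) (π (π j)) : ↥(T (π (π j)))) : M) = (↑y : M) := by
        have h1 := congrArg (fun i => (((E.symm (↑y : M)) i : ↥(T i)) : M)) (hππ j)
        simp only at h1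
        rw [h1, hsame j y]
      rw [hcomp j y]
      have hy2T : ∀ w : M, w ∈ T j → ψ w ∈ T (π j) ∧ ψ' w ∈ T (π j) := by
        intro w hw
        exact ⟨hψT (j : R) j.2 w hw, hψ'T (j : R) j.2 w hw⟩
      by_cases hw : WellOrderingRel ((π j : R)) (nσ ((π j) : R))
      · rw [hu_swapT (π j) _ hj' hw, eπcoe]
        have hmem2 : ψ (↑y : M) ∈ T (π j) := (hy2T _ y.2).1
        rw [show ψ (↑y : M) = ((⟨ψ ↑y, hmem2⟩ : ↥(T (π j))) : M) from rfl]
        rw [hcomp (π j) ⟨ψ ↑y, hmem2⟩, hππ j]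
        have hw2 : ¬ WellOrderingRel (j : R) (nσ (j : R)) := by
          intro hw3
          have hwj : WellOrderingRel (nσ (j : R)) (j : R) := by
            have := hw
            rwa [show ((π j : R)) = nσ (j : R) from rfl, hcond] at this
          exact (IsWellFounded.wf (r := @WellOrderingRel R)).asymmetric _ _ hwj hw3
        rw [hu_swapF j _ hj hw2, hsame (π j) ⟨ψ ↑y, hmem2⟩]
        exact hψψ' _
      · rw [hu_swapF (π j) _ hj' hw, eπcoe]
        have hmem2 : ψ' (↑y : M) ∈ T (π j) := (hy2T _ y.2).2
        rw [show ψ' (↑y : M) = ((⟨ψ' ↑y, hmem2⟩ : ↥(T (π j))) : M) from rfl]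
        rw [hcomp (π j) ⟨ψ' ↑y, hmem2⟩, hππ j]
        have hw2 : WellOrderingRel (j : R) (nσ (j : R)) := by
          have hwn : ¬ WellOrderingRel (nσ (j : R)) (j : R) := by
            intro hcon2
            apply hw
            rwa [show ((π j : R)) = nσ (j : R) from rfl, hcond]
          rcases trichotomous_of WellOrderingRel (j : R) (nσ (j : R)) with h1 | h1 | h1
          · exact h1
          · exact absurd h1.symm hj
          · exact absurd h1 hwn
        rw [hu_swapT j _ hj hw2, hsame (π j) ⟨ψ' ↑y, hmem2⟩]
        exact hψ'ψ _
  -- global involution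
  have hsumh : ∀ (f : {x // x ∈ S} → M), h (∑ i, f i) = ∑ i, h (f i) :=
    fun f => _root_.map_sum (AddMonoidHom.mk' h hadd) f Finset.univ
  have hhh : ∀ x, h (h x) = x := by
    intro x
    have step1 : h x = ∑ i, h ((((E.symm x) i) : M)) := by
      conv_lhs => rw [← hdecomp x]
      exact hsumh _
    have step2 : h (h x) = ∑ i, h (h (((E.symm x) i : M))) := by
      rw [step1]
      exact hsumh _
    rw [step2]
    calc ∑ i, h (h ↑((E.symm x) i)) = ∑ i, ((((E.symm x) i) : M)) :=
          Finset.sum_congr rfl fun i _ => hinvcomp i ((E.symm x) i)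
    _ = x := hdecomp x
  exact ⟨h, hhh, hadd, hsmul⟩



end Key

theorem endo_inv {F : Type} [Field F] {V : Type} [AddCommGroup V] [Module F V]
    [FiniteDimensional F V] (f g : V →ₗ[F] V) (hg : Function.Bijective g)
    (hfg : g * f = -(f * g)) :
    ∃ h : V →ₗ[F] V, h * h = 1 ∧ h * f = -(f * h) ∧ Function.Bijective h := by
  classical
  set σA : F[X] →ₐ[F] F[X] := aeval (-X : F[X]) with hσA
  have hσcomp : σA.comp σA = AlgHom.id F F[X] := by
    apply Polynomial.algHom_ext
    simp [hσA]
  have hσ : ∀ p, σA (σA p) = p := by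
    intro p
    have := DFunLike.congr_fun hσcomp p
    simpa using this
  -- conjugation of polynomials in f by g
  have hpow : ∀ n : ℕ, g * f ^ n = (-f) ^ n * g := by
    intro n
    induction n with
    | zero => simp
    | succ m ih =>
        calc g * f ^ (m + 1) = (g * f ^ m) * f := by rw [pow_succ, mul_assoc]
        _ = ((-f) ^ m * g) * f := by rw [ih]
        _ = (-f) ^ m * (g * f) := by rw [mul_assoc]
        _ = (-f) ^ m * ((-f) * g) := by rw [hfg, _root_.neg_mul]
        _ = (-f) ^ (m + 1) * g := by rw [← mul_assoc, ← pow_succ]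
  have hconj : ∀ p : F[X], g * (aeval f p) = (aeval f (σA p)) * g := by
    intro p
    induction p using Polynomial.induction_on' with
    | add p q hp hq =>
        have e1 : (aeval f) (p + q) = aeval f p + aeval f q := _root_.map_add _ _ _
        have e2 : σA (p + q) = σA p + σA q := _root_.map_add _ _ _
        rw [e1, e2, _root_.map_add, mul_add, hp, hq, add_mul]
    | monomial n t =>
        have h1 : (aeval f) ((monomial n) t) = algebraMap F _ t * f ^ n := by
          rw [aeval_monomial]
        have h2 : σA ((monomial n) t) = C t * (-X : F[X]) ^ n := by
          rw [hσA, aeval_monomial, algebraMap_eq]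
        have h3 : (aeval f) (σA ((monomial n) t)) = algebraMap F _ t * (-f) ^ n := by
          rw [h2, _root_.map_mul, _root_.map_pow, _root_.map_neg, aeval_X, aeval_C]
        rw [h1, h3, ← mul_assoc, ← Algebra.commutes t g, mul_assoc, hpow, ← mul_assoc]
  -- set up the module over F[X]
  have hcM : ∀ x : Module.AEval' f, (LinearMap.charpoly f) • x = 0 := by
    intro x
    apply (Module.AEval.of F V f).symm.injective
    rw [Module.AEval.of_symm_smul, LinearMap.aeval_self_charpoly, _root_.map_zero]
    exact zero_smul _ _
  set ge := Equiv.ofBijective g hg with hge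
  set ψ : Module.AEval' f → Module.AEval' f :=
    fun x => Module.AEval.of F V f (g ((Module.AEval.of F V f).symm x)) with hψdef
  set ψ' : Module.AEval' f → Module.AEval' f :=
    fun x => Module.AEval.of F V f (ge.symm ((Module.AEval.of F V f).symm x)) with hψ'def
  have hψψ' : ∀ x, ψ' (ψ x) = x := by
    intro x
    simp only [hψdef, hψ'def, LinearEquiv.symm_apply_apply]
    have h1 : ge.symm (g ((Module.AEval.of F V f).symm x)) = (Module.AEval.of F V f).symm x :=
      ge.symm_apply_apply _
    rw [h1, LinearEquiv.apply_symm_apply]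
  have hψ'ψ : ∀ x, ψ (ψ' x) = x := by
    intro x
    simp only [hψdef, hψ'def, LinearEquiv.symm_apply_apply]
    have h1 : g (ge.symm ((Module.AEval.of F V f).symm x)) = (Module.AEval.of F V f).symm x :=
      ge.apply_symm_apply _
    rw [h1, LinearEquiv.apply_symm_apply]
  have hψadd : ∀ x y, ψ (x + y) = ψ x + ψ y := by
    intro x y
    simp only [hψdef, _root_.map_add]
  have hψs : ∀ (p : F[X]) (x : Module.AEval' f), ψ (p • x) = σA p • ψ x := by
    intro p x
    simp only [hψdef]
    rw [Module.AEval.of_symm_smul]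
    have h1 : g ((aeval f p) • ((Module.AEval.of F V f).symm x)) =
        (aeval f (σA p)) • (g ((Module.AEval.of F V f).symm x)) := by
      rw [Module.End.smul_def, Module.End.smul_def, ← Module.End.mul_apply, ← Module.End.mul_apply,
        hconj]
    rw [h1, Module.AEval.of_aeval_smul]
  obtain ⟨h, hh, hadd, hsmul⟩ := key (σA.toRingHom) hσ (LinearMap.charpoly f)
    (LinearMap.charpoly_monic f).ne_zero hcM ψ ψ' hψψ' hψ'ψ hψadd hψs
  -- package h as an F-linear map on V
  have hCsmul : ∀ (t : F) (m : Module.AEval' f), h (t • m) = t • h m := by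
    intro t m
    have h1 : (Polynomial.C t : F[X]) • m = t • m := Module.AEval.C_smul (R := F) (M := V) (a := f) t m
    have h2 : σA.toRingHom (Polynomial.C t) = Polynomial.C t := by
      show σA (Polynomial.C t) = Polynomial.C t
      rw [hσA, aeval_C, algebraMap_eq]
    rw [← h1, hsmul, h2, Module.AEval.C_smul]
  set hV : V →ₗ[F] V :=
    { toFun := fun v => (Module.AEval.of F V f).symm (h (Module.AEval.of F V f v))
      map_add' := by
        intro a b
        show (Module.AEval.of F V f).symm (h (Module.AEval.of F V f (a + b))) = _
        rw [_root_.map_add, hadd, _root_.map_add]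
      map_smul' := by
        intro t a
        show (Module.AEval.of F V f).symm (h (Module.AEval.of F V f (t • a))) = _
        rw [_root_.map_smul, hCsmul, _root_.map_smul]
        rfl } with hVdef
  have hVapp : ∀ v, hV v = (Module.AEval.of F V f).symm (h (Module.AEval.of F V f v)) :=
    fun v => rfl
  refine ⟨hV, ?_, ?_, ?_⟩
  · apply LinearMap.ext
    intro v
    rw [Module.End.mul_apply, hVapp, hVapp, LinearEquiv.apply_symm_apply, hh,
      LinearEquiv.symm_apply_apply, Module.End.one_apply]
  · apply LinearMap.ext
    intro v
    rw [Module.End.mul_apply, hVapp]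
    have h1 : Module.AEval.of F V f (f v) = (X : F[X]) • Module.AEval.of F V f v :=
      (Module.AEval'.X_smul_of f v).symm
    have h2 : σA.toRingHom (X : F[X]) = -X := by
      show σA (X : F[X]) = -X
      rw [hσA, aeval_X]
    rw [h1, hsmul, h2, neg_smul, _root_.map_neg]
    have h3 : (Module.AEval.of F V f).symm ((X : F[X]) • h (Module.AEval.of F V f v)) =
        f ((Module.AEval.of F V f).symm (h (Module.AEval.of F V f v))) :=
      Module.AEval'.of_symm_X_smul f _
    rw [h3, LinearMap.neg_apply, Module.End.mul_apply, hVapp]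
  · have hinv : ∀ v, hV (hV v) = v := by
      intro v
      rw [hVapp, hVapp, LinearEquiv.apply_symm_apply, hh, LinearEquiv.symm_apply_apply]
    exact Function.bijective_iff_has_inverse.mpr ⟨hV, hinv, hinv⟩

theorem matrix_iff {F : Type} [Field F] {n : ℕ} (X : Matrix (Fin n) (Fin n) F) :
    AdjReal X ↔ StronglyAdjReal X := by
  constructor
  · rintro ⟨gu, hgu⟩
    set A := Matrix.toLinAlgEquiv' (R := F) (n := Fin n) with hA
    set f := A X with hf
    set g := A gu.val with hgdef
    have hbij : Function.Bijective g := by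
      have hli : Function.LeftInverse (A (gu⁻¹).val) g := by
        intro v
        have : (A (gu⁻¹).val) (g v) = ((A (gu⁻¹).val) * g) v := rfl
        rw [this, hgdef, ← _root_.map_mul, Units.inv_mul, _root_.map_one, Module.End.one_apply]
      have hri : Function.RightInverse (A (gu⁻¹).val) g := by
        intro v
        have : g ((A (gu⁻¹).val) v) = (g * (A (gu⁻¹).val)) v := rfl
        rw [this, hgdef, ← _root_.map_mul, Units.mul_inv, _root_.map_one, Module.End.one_apply]
      exact Function.bijective_iff_has_inverse.mpr ⟨_, hli, hri⟩
    have hmat : gu.val * X = -X * gu.val := by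
      have h1 := congrArg (fun B => B * gu.val) hgu
      rwa [mul_assoc, Units.inv_mul, mul_one] at h1
    have hfg : g * f = -(f * g) := by
      rw [hgdef, hf, ← _root_.map_mul, hmat, _root_.map_mul, _root_.map_neg]
      exact _root_.neg_mul (A X) (A gu.val)
    obtain ⟨h, hh1, hh2, _⟩ := endo_inv f g hbij hfg
    set H := A.symm h with hH
    have hH1 : H * H = 1 := by
      rw [hH, ← _root_.map_mul, hh1, _root_.map_one]
    have hH2 : H * X = -(X * H) := by
      have h1 := congrArg A.symm hh2
      rw [_root_.map_mul, _root_.map_neg, _root_.map_mul] at h1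
      have h2 : A.symm f = X := by rw [hf, AlgEquiv.symm_apply_apply]
      rw [h2] at h1
      exact h1
    refine ⟨⟨H, H, hH1, hH1⟩, ?_, ?_⟩
    · apply Units.ext
      exact hH1
    · show H * X * H = -X
      rw [hH2, _root_.neg_mul, mul_assoc, hH1, mul_one]
  · rintro ⟨gu, _, hgu⟩
    exact ⟨gu, hgu⟩


end Stmt13Aux

/-- For `D = ℝ` or `ℂ`, an element of `gl(n,D)` is `Ad_{GL(n,D)}`-real if and
only if it is strongly `Ad_{GL(n,D)}`-real. -/
theorem stmt13 (n : ℕ) :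
    (∀ X : Matrix (Fin n) (Fin n) ℝ, AdjReal X ↔ StronglyAdjReal X) ∧
    (∀ X : Matrix (Fin n) (Fin n) ℂ, AdjReal X ↔ StronglyAdjReal X) := by
  exact ⟨fun X => matrix_iff X, fun X => matrix_iff X⟩
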